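/- Let g ≥ 2 and let α : ℤ^{2g} → ℂˣ be a group homomorphism whose image is not contained in the unit circle. Then there exists a group homomorphism p : ℤ^{2g} → ℂ (into the additive group of ℂ) with exp(p(v)) = α(v) for all v ∈ ℤ^{2g}, and whose volume vol(p) := Σ_{i=1}^g ( Re(p(eᵢ))·Im(p(e_{g+i})) − Im(p(eᵢ))·Re(p(e_{g+i})) ) is strictly positive, where e₁,…,e_{2g} is the standard basis of ℤ^{2g}. -/

import Mathlib

open Complex Finset

private lemma exists_int_shift (S a : ℝ) (ha : a ≠ 0) :
    ∃ N : ℤ, 0 < S + 2 * Real.pi * N * a := by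
  obtain ⟨n, hn⟩ := exists_nat_gt (|S| / (2 * Real.pi * |a|))
  have hπ : (0:ℝ) < 2 * Real.pi * |a| := by positivity
  have h1 : |S| < n * (2 * Real.pi * |a|) := (div_lt_iff₀ hπ).mp hn
  have h2 := neg_abs_le S
  rcases ha.lt_or_gt with h | h
  · refine ⟨-n, ?_⟩
    push_cast
    rw [abs_of_neg h] at h1
    linarith
  · refine ⟨n, ?_⟩
    push_cast
    rw [abs_of_pos h] at h1
    linarith

@[reducible] private def eA (g : ℕ) (i : Fin g) : Fin (2*g) := ⟨i.val, by omega⟩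
@[reducible] private def eB (g : ℕ) (i : Fin g) : Fin (2*g) := ⟨g + i.val, by omega⟩

/-- let `g ≥ 2` and `α : ℤ^(2g) → ℂˣ` a homomorphism whose image
is not contained in the unit circle. Then `α` lifts through `exp` to an
additive homomorphism `p : ℤ^(2g) → ℂ` of positive volume
`vol(p) = ∑_{i=1}^g ( Re(p eᵢ)·Im(p e_{g+i}) - Im(p eᵢ)·Re(p e_{g+i}) )`. -/
theorem exists_positive_volume_log_lift (g : ℕ) (hg : 2 ≤ g)
    (α : (Fin (2 * g) → ℤ) → ℂˣ)
    (hα : ∀ v w : Fin (2 * g) → ℤ, α (v + w) = α v * α w)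
    (him : ¬ ∀ v : Fin (2 * g) → ℤ, ‖(α v : ℂ)‖ = 1) :
    ∃ p : (Fin (2 * g) → ℤ) → ℂ,
      (∀ v w : Fin (2 * g) → ℤ, p (v + w) = p v + p w) ∧
      (∀ v : Fin (2 * g) → ℤ, Complex.exp (p v) = (α v : ℂ)) ∧
      0 < ∑ i : Fin g,
        ((p (Pi.single ⟨i.val, by have := i.isLt; omega⟩ 1)).re *
            (p (Pi.single ⟨g + i.val, by have := i.isLt; omega⟩ 1)).im -
          (p (Pi.single ⟨i.val, by have := i.isLt; omega⟩ 1)).im *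
            (p (Pi.single ⟨g + i.val, by have := i.isLt; omega⟩ 1)).re) := by
  -- decomposition of α over the standard basis
  have hdecomp : ∀ v : Fin (2*g) → ℤ,
      (α v : ℂ) = ∏ j, ((α (Pi.single j 1) : ℂ)) ^ (v j) := by
    intro v
    let A : (Fin (2*g) → ℤ) →+ Additive ℂˣ :=
      AddMonoidHom.mk' (fun v => Additive.ofMul (α v)) (by intro v w; simp [hα v w])
    have h1 : A v = ∑ j, (v j) • A (Pi.single j 1) := by
      conv_lhs => rw [← Finset.univ_sum_single v]
      rw [map_sum]
      refine Finset.sum_congr rfl fun j _ => ?_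
      rw [← map_zsmul]
      congr 1
      ext k
      by_cases hk : k = j <;> simp [Pi.single_apply, hk]
    have h2 : α v = ∏ j, (α (Pi.single j 1)) ^ (v j) := by
      have := congrArg Additive.toMul h1
      simpa [A, toMul_sum, toMul_zsmul] using this
    rw [h2]; push_cast; rfl
  -- value of the canonical lift on basis vectors
  have psingle : ∀ (c : Fin (2*g) → ℂ) (j : Fin (2*g)),
      (∑ j', ((Pi.single j 1 : Fin (2*g) → ℤ) j' : ℂ) * c j') = c j := by
    intro c j
    rw [Finset.sum_eq_single j]
    · simp
    · intro b _ hb; simp [Pi.single_apply, hb]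
    · simp
  -- the general lift
  have main : ∀ c : Fin (2*g) → ℂ,
      (∀ j, Complex.exp (c j) = (α (Pi.single j 1) : ℂ)) →
      (∀ v w : Fin (2*g) → ℤ,
        (∑ j, (((v+w) j : ℤ) : ℂ) * c j)
          = (∑ j, ((v j : ℤ) : ℂ) * c j) + ∑ j, ((w j : ℤ) : ℂ) * c j) ∧
      (∀ v : Fin (2*g) → ℤ, Complex.exp (∑ j, ((v j : ℤ) : ℂ) * c j) = (α v : ℂ)) := by
    intro c hc
    constructor
    · intro v w
      rw [← Finset.sum_add_distrib]
      refine Finset.sum_congr rfl fun j _ => ?_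
      push_cast [Pi.add_apply]
      ring
    · intro v
      rw [Complex.exp_sum, hdecomp v]
      exact Finset.prod_congr rfl fun j _ => by rw [Complex.exp_int_mul, hc]
  -- the principal logarithms
  set L : Fin (2*g) → ℂ := fun j => Complex.log (α (Pi.single j 1)) with hLdef
  have hL : ∀ j, Complex.exp (L j) = (α (Pi.single j 1) : ℂ) :=
    fun j => Complex.exp_log (Units.ne_zero _)
  -- some basis vector has nonzero real part of log
  have hj₀ : ∃ j, (L j).re ≠ 0 := by
    by_contra hcon
    push_neg at hcon
    apply him
    intro v
    obtain ⟨_, hexp⟩ := main L hL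
    rw [← hexp v, Complex.norm_exp]
    have hre0 : (∑ j, ((v j : ℤ) : ℂ) * L j).re = 0 := by
      rw [Complex.re_sum]
      refine Finset.sum_eq_zero fun j _ => ?_
      simp [hcon j]
    rw [hre0, Real.exp_zero]
  obtain ⟨j₀, hr⟩ := hj₀
  -- baseline volume
  have hS₀ : ∃ S₀ : ℝ, S₀ = ∑ i : Fin g,
      ((L (eA g i)).re * (L (eB g i)).im - (L (eA g i)).im * (L (eB g i)).re) := ⟨_, rfl⟩
  obtain ⟨S₀, hS₀⟩ := hS₀
  -- choose the partner index m, the corresponding Fin g index i₀, and the slope a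
  obtain ⟨m, i₀, a, hmA, hmB, ha, hane⟩ :
      ∃ (m : Fin (2*g)) (i₀ : Fin g) (a : ℝ),
        ((eA g i₀ = m ∧ eB g i₀ = j₀ ∧ a = -(L j₀).re) ∨
         (eB g i₀ = m ∧ eA g i₀ = j₀ ∧ a = (L j₀).re ∧ g ≤ m.val)) ∧ True ∧ True ∧ a ≠ 0 := by
    by_cases hcase : j₀.val < g
    · exact ⟨⟨g + j₀.val, by omega⟩, ⟨j₀.val, hcase⟩, (L j₀).re,
        Or.inr ⟨rfl, Fin.ext rfl, rfl, by simp⟩, trivial, trivial, hr⟩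
    · exact ⟨⟨j₀.val - g, by omega⟩, ⟨j₀.val - g, by omega⟩, -(L j₀).re,
        Or.inl ⟨rfl, Fin.ext (by simp; omega), rfl⟩, trivial, trivial, by simpa using hr⟩
  obtain ⟨N, hN⟩ := exists_int_shift S₀ a hane
  -- the shifted logarithms
  set c : Fin (2*g) → ℂ :=
    fun j => if j = m then L j + (N : ℂ) * (2 * Real.pi * Complex.I) else L j with hcdef
  have hcne : ∀ j, j ≠ m → c j = L j := by intro j hj; simp [hcdef, hj]
  have hcre : ∀ j, (c j).re = (L j).re := by
    intro j; by_cases hj : j = m <;> simp [hcdef, hj]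
  have hcim : (c m).im = (L m).im + 2 * Real.pi * N := by simp [hcdef]; ring
  have hc : ∀ j, Complex.exp (c j) = (α (Pi.single j 1) : ℂ) := by
    intro j
    by_cases hj : j = m
    · simp only [hcdef, if_pos hj]
      rw [Complex.exp_add, Complex.exp_int_mul_two_pi_mul_I, mul_one, hL]
    · simp only [hcdef, if_neg hj]; exact hL j
  obtain ⟨hadd, hexp⟩ := main c hc
  -- the volume of the shifted lift
  have hterm : ∀ i : Fin g,
      ((c (eA g i)).re * (c (eB g i)).im - (c (eA g i)).im * (c (eB g i)).re)
      = ((L (eA g i)).re * (L (eB g i)).im - (L (eA g i)).im * (L (eB g i)).re)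
        + (if i = i₀ then 2 * Real.pi * N * a else 0) := by
    intro i
    rcases hmA with ⟨h1, h2, h3⟩ | ⟨h1, h2, h3, h4⟩
    · -- m = eA i₀ is in the first half, eB j₀ = j₀, a = -r
      have hBne : ∀ i' : Fin g, eB g i' ≠ m := by
        intro i' hh
        have : g + i'.val = m.val := congrArg Fin.val hh
        have : m.val = i₀.val := (congrArg Fin.val h1).symm
        omega
      by_cases hi : i = i₀
      · subst hi
        rw [h1, h2, hcne j₀ (by rw [← h2]; exact hBne i), hcre m, hcim, if_pos rfl, h3]
        ring
      · have hAne : eA g i ≠ m := by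
          rw [← h1]
          simp only [Ne, Fin.ext_iff, eA]
          exact fun hh => hi (Fin.ext hh)
        rw [hcne _ hAne, hcne _ (hBne i), if_neg hi]
        ring
    · -- m = eB i₀ is in the second half, eA i₀ = j₀, a = r
      have hAne : ∀ i' : Fin g, eA g i' ≠ m := by
        intro i' hh
        have : i'.val = m.val := congrArg Fin.val hh
        omega
      by_cases hi : i = i₀
      · subst hi
        rw [h1, h2, hcne j₀ (by rw [← h2]; exact hAne i), hcre m, hcim, if_pos rfl, h3]
        ring
      · have hBne : eB g i ≠ m := by
          rw [← h1]
          intro hh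
          have := congrArg Fin.val hh
          exact hi (Fin.ext (by simpa using this))
        rw [hcne _ (hAne i), hcne _ hBne, if_neg hi]
        ring
  have hvol : 0 < ∑ i : Fin g,
      ((c (eA g i)).re * (c (eB g i)).im - (c (eA g i)).im * (c (eB g i)).re) := by
    rw [Finset.sum_congr rfl fun i _ => hterm i, Finset.sum_add_distrib,
      Finset.sum_ite_eq' univ i₀ fun _ => 2 * Real.pi * N * a,
      if_pos (Finset.mem_univ i₀), ← hS₀]
    exact hN
  refine ⟨fun v => ∑ j, ((v j : ℤ) : ℂ) * c j, hadd, hexp, ?_⟩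
  simp only [psingle c]
  exact hvol
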